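/- Transposition invariance of greedy MIS: let G = (V,E) be a finite simple graph, σ a linear order on V, and let u, v be two vertices that are consecutive in σ (v is the immediate σ-successor of u) and are not adjacent in G. Let σ' be the linear order obtained from σ by exchanging the positions of u and v. Then Greedy(G,σ') = Greedy(G,σ). -/
import Mathlib


/-- The greedy (lexicographically first) independent set of a finite simple graph `G`
with respect to a linear order `σ` on its vertices: a vertex `v` is added iff no
neighbor of `v` preceding `v` in `σ` has already been added. -/
noncomputable def greedy {V : Type*} [Finite V] (σ : LinearOrder V) (G : SimpleGraph V) :
    Set V :=
  letI := σ
  fun v => WellFounded.fix (Finite.wellFounded_of_trans_of_irrefl ((· < ·) : V → V → Prop))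
    (fun v ih => ∀ u, (h : u < v) → G.Adj u v → ¬ ih u h) v

/-- The restriction of a linear order `σ` on `V` to a subset `U ⊆ V`. -/
noncomputable def restrictOrder {V : Type*} (σ : LinearOrder V) (U : Set V) :
    LinearOrder ↥U :=
  letI := σ
  inferInstance

/-- The closed neighborhood `N(S)` of a vertex set `S`: the union of `S` with the set of
all vertices adjacent in `G` to some vertex of `S`. -/
def closedN {V : Type*} (G : SimpleGraph V) (S : Set V) : Set V :=
  S ∪ {v | ∃ s ∈ S, G.Adj s v}

lemma greedy_iff {V : Type*} [Finite V] (σ : LinearOrder V) (G : SimpleGraph V) (x : V) :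
    greedy σ G x ↔ ∀ y, σ.lt y x → G.Adj y x → ¬ greedy σ G y := by
  unfold greedy
  exact (WellFounded.fix_eq _ _ x) ▸ Iff.rfl

open scoped Classical in
noncomputable def sw {V : Type*} (u v x : V) : V :=
  if x = u then v else if x = v then u else x

lemma swap_eq_sw {V : Type*} (i : DecidableEq V) (u v x : V) :
    @Equiv.swap V i u v x = sw u v x := by
  rw [Equiv.swap_apply_def]
  unfold sw
  rcases eq_or_ne x u with h | h <;> rcases eq_or_ne x v with h' | h' <;> simp [h, h']

lemma sw_left {V : Type*} (u v : V) : sw u v u = v := by simp [sw]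
lemma sw_right {V : Type*} (u v : V) (h : v ≠ u) : sw u v v = u := by simp [sw, h]
lemma sw_other {V : Type*} {u v x : V} (h : x ≠ u) (h' : x ≠ v) : sw u v x = x := by
  simp [sw, h, h']

/-- Transposition invariance of greedy MIS: if `v` is the immediate `σ`-successor of `u`,
`u` and `v` are not adjacent in `G`, and `σ'` is obtained from `σ` by exchanging the
positions of `u` and `v`, then `Greedy(G,σ') = Greedy(G,σ)`. -/
theorem greedy_transpositionInvariant {V : Type*} [Finite V] (σ σ' : LinearOrder V)
    (G : SimpleGraph V) (u v : V)
    (huv : σ.lt u v) (hsucc : ∀ w : V, σ.lt u w → σ.le v w)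
    (hnadj : ¬ G.Adj u v)
    (hσ' : ∀ x y : V, σ'.lt x y ↔ σ.lt (Equiv.swap u v x) (Equiv.swap u v y)) :
    greedy σ' G = greedy σ G := by
  simp only [swap_eq_sw] at hσ'
  letI := σ
  have hvu : v ≠ u := ne_of_gt huv
  have wf : WellFounded ((· < ·) : V → V → Prop) :=
    Finite.wellFounded_of_trans_of_irrefl _
  have key : ∀ x : V, greedy σ' G x ↔ greedy σ G x := by
    intro x
    induction x using wf.induction with
    | _ x ih =>
      rw [greedy_iff σ' G x, greedy_iff σ G x]
      by_cases hxu : x = u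
      · subst hxu
        -- now u is named x; huv : x < v, hsucc about x
        constructor
        · intro h y hy hadj
          have hyx : y ≠ x := ne_of_lt hy
          have hyv : y ≠ v := fun e => absurd huv (not_lt_of_gt (e ▸ hy))
          have h1 : σ'.lt y x := by
            rw [hσ', sw_left, sw_other hyx hyv]
            exact hy.trans huv
          rw [← ih y hy]
          exact h y h1 hadj
        · intro h y hy hadj
          rw [hσ', sw_left] at hy
          rcases eq_or_ne y v with rfl | hyv
          · exact absurd hadj.symm hnadj
          have hyx : y ≠ x := fun e => by
            rw [e, sw_left] at hy; exact lt_irrefl v hy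
          rw [sw_other hyx hyv] at hy
          have hyu : y < x := by
            by_contra hc
            push_neg at hc
            have : x < y := lt_of_le_of_ne hc (Ne.symm hyx)
            exact absurd hy (not_lt_of_ge (hsucc y this))
          rw [ih y hyu]
          exact h y hyu hadj
      · by_cases hxv : x = v
        · subst hxv
          -- now v is named x; huv : u < x
          constructor
          · intro h y hy hadj
            have hyx : y ≠ x := ne_of_lt hy
            have hyu : y ≠ u := fun e => absurd hadj (e ▸ hnadj)
            have hyltu : y < u := by
              by_contra hc
              push_neg at hc
              have : u < y := lt_of_le_of_ne hc (Ne.symm hyu)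
              exact absurd hy (not_lt_of_ge (hsucc y this))
            have h1 : σ'.lt y x := by
              rw [hσ', sw_right u x hxu, sw_other hyu hyx]
              exact hyltu
            rw [← ih y hy]
            exact h y h1 hadj
          · intro h y hy hadj
            rw [hσ', sw_right u x hxu] at hy
            have hyu : y ≠ u := fun e => by
              rw [e, sw_left] at hy; exact absurd hy (not_lt_of_gt huv)
            have hyx : y ≠ x := fun e => by
              rw [e, sw_right u x hxu] at hy; exact lt_irrefl u hy
            rw [sw_other hyu hyx] at hy
            have hyltx : y < x := hy.trans huv
            rw [ih y hyltx]
            exact h y hyltx hadj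
        · have hset : ∀ y, σ'.lt y x ↔ y < x := by
            intro y
            rw [hσ', sw_other hxu hxv]
            rcases eq_or_ne y u with rfl | hyu
            · rw [sw_left]
              exact ⟨fun h => huv.trans h, fun h => lt_of_le_of_ne (hsucc x h) (Ne.symm hxv)⟩
            · rcases eq_or_ne y v with rfl | hyv
              · rw [sw_right _ _ hvu]
                exact ⟨fun h => lt_of_le_of_ne (hsucc x h) (Ne.symm hxv), fun h => huv.trans h⟩
              · rw [sw_other hyu hyv]
          constructor
          · intro h y hy hadj
            rw [← ih y hy]
            exact h y ((hset y).mpr hy) hadj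
          · intro h y hy hadj
            rw [hset y] at hy
            rw [ih y hy]
            exact h y hy hadj
  ext x
  exact key x
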